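/- Let A : ℝ → ℝ be twice continuously differentiable, 1-periodic and everywhere positive, let H, K, ρ : ℝ → ℝ be continuous and 1-periodic with ρ ≥ 0, let a > 0 be a constant and ε ∈ {1, 0, −1}, and suppose the Hamiltonian constraint (A^{1/2})''(x) = (1/8)A(x)^{5/2}(H(x)² − (1/2)(H(x)−K(x))² − K(x)² − 16πρ(x)) + (1/4)A(x)^{1/2}a^{−2}ε holds for all x ∈ ℝ. Then 2π ∫₀¹ A^{5/2}ρ dx ≤ (1/8) ∫₀¹ A^{5/2}H² dx + (1/4) ∫₀¹ A^{1/2}a^{−2} dx. -/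

import Mathlib

open Real MeasureTheory

/-- Integrated-energy estimate from the Hamiltonian constraint (Proposition 3.5):
`2π ∫ A^{5/2} ρ ≤ (1/8) ∫ A^{5/2} H² + (1/4) ∫ A^{1/2} a⁻²` over one period. -/
theorem hamiltonian_constraint_energy_estimate
    (A H K ρ : ℝ → ℝ) (a ε : ℝ)
    (hA : ContDiff ℝ 2 A) (hAper : Function.Periodic A 1) (hApos : ∀ x, 0 < A x)
    (hH : Continuous H) (hHper : Function.Periodic H 1)
    (hK : Continuous K) (hKper : Function.Periodic K 1)
    (hρ : Continuous ρ) (hρper : Function.Periodic ρ 1) (hρnn : ∀ x, 0 ≤ ρ x)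
    (ha : 0 < a) (hε : ε = 1 ∨ ε = 0 ∨ ε = -1)
    (heq : ∀ x, deriv (deriv (fun y => Real.sqrt (A y))) x =
      (1/8) * (A x) ^ ((5:ℝ)/2) *
        ((H x) ^ 2 - (1/2) * (H x - K x) ^ 2 - (K x) ^ 2 - 16 * π * ρ x)
      + (1/4) * (A x) ^ ((1:ℝ)/2) * (a ^ 2)⁻¹ * ε) :
    2 * π * ∫ x in (0:ℝ)..1, (A x) ^ ((5:ℝ)/2) * ρ x ≤
      (1/8) * (∫ x in (0:ℝ)..1, (A x) ^ ((5:ℝ)/2) * (H x) ^ 2)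
      + (1/4) * ∫ x in (0:ℝ)..1, (A x) ^ ((1:ℝ)/2) * (a ^ 2)⁻¹ := by
  set g : ℝ → ℝ := fun y => Real.sqrt (A y) with hgdef
  have hg : ContDiff ℝ 2 g := by
    rw [contDiff_iff_contDiffAt] at hA ⊢
    intro x
    exact (Real.contDiffAt_sqrt (hApos x).ne').comp x (hA x)
  have hgper : Function.Periodic g 1 := fun x => by simp [hgdef, hAper x]
  have hdgper : Function.Periodic (deriv g) 1 := by
    intro x
    have : (fun y => g (y + 1)) = g := funext hgper
    rw [← deriv_comp_add_const g 1 x, this]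
  have hdg1 : ContDiff ℝ 1 (deriv g) := by
    have := (contDiff_succ_iff_deriv (n := 1)).mp (by exact_mod_cast hg)
    exact this.2.2
  -- continuity of powers
  have hA52 : Continuous (fun x => (A x) ^ ((5:ℝ)/2)) :=
    hA.continuous.rpow_const (fun x => Or.inl (hApos x).ne')
  have hA12 : Continuous (fun x => (A x) ^ ((1:ℝ)/2)) :=
    hA.continuous.rpow_const (fun x => Or.inl (hApos x).ne')
  have hRHScont : Continuous (fun x => (1/8) * (A x) ^ ((5:ℝ)/2) *
        ((H x) ^ 2 - (1/2) * (H x - K x) ^ 2 - (K x) ^ 2 - 16 * π * ρ x)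
      + (1/4) * (A x) ^ ((1:ℝ)/2) * (a ^ 2)⁻¹ * ε) := by
    exact ((continuous_const.mul hA52).mul ((((hH.pow 2).sub
      (continuous_const.mul ((hH.sub hK).pow 2))).sub (hK.pow 2)).sub
      ((continuous_const.mul continuous_const).mul hρ))).add
      (((continuous_const.mul hA12).mul continuous_const).mul continuous_const)
  have hddg : (deriv (deriv g)) = fun x => (1/8) * (A x) ^ ((5:ℝ)/2) *
        ((H x) ^ 2 - (1/2) * (H x - K x) ^ 2 - (K x) ^ 2 - 16 * π * ρ x)
      + (1/4) * (A x) ^ ((1:ℝ)/2) * (a ^ 2)⁻¹ * ε := funext heq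
  have hint0 : (∫ x in (0:ℝ)..1, deriv (deriv g) x) = 0 := by
    rw [intervalIntegral.integral_deriv_eq_sub
      (fun x _ => (hdg1.differentiable one_ne_zero) x)
      (by rw [hddg]; exact hRHScont.intervalIntegrable 0 1)]
    have := hdgper 0
    simp at this
    rw [this]; ring
  -- integrability of the pieces
  have i1 : IntervalIntegrable (fun x => (A x) ^ ((5:ℝ)/2) * (H x) ^ 2) volume 0 1 :=
    (hA52.mul (hH.pow 2)).intervalIntegrable 0 1
  have i2 : IntervalIntegrable (fun x => (A x) ^ ((5:ℝ)/2) * (H x - K x) ^ 2) volume 0 1 :=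
    (hA52.mul ((hH.sub hK).pow 2)).intervalIntegrable 0 1
  have i3 : IntervalIntegrable (fun x => (A x) ^ ((5:ℝ)/2) * (K x) ^ 2) volume 0 1 :=
    (hA52.mul (hK.pow 2)).intervalIntegrable 0 1
  have iρ : IntervalIntegrable (fun x => (A x) ^ ((5:ℝ)/2) * ρ x) volume 0 1 :=
    (hA52.mul hρ).intervalIntegrable 0 1
  have iJ : IntervalIntegrable (fun x => (A x) ^ ((1:ℝ)/2) * (a ^ 2)⁻¹) volume 0 1 :=
    (hA12.mul continuous_const).intervalIntegrable 0 1
  set I1 := ∫ x in (0:ℝ)..1, (A x) ^ ((5:ℝ)/2) * (H x) ^ 2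
  set I2 := ∫ x in (0:ℝ)..1, (A x) ^ ((5:ℝ)/2) * (H x - K x) ^ 2
  set I3 := ∫ x in (0:ℝ)..1, (A x) ^ ((5:ℝ)/2) * (K x) ^ 2
  set Iρ := ∫ x in (0:ℝ)..1, (A x) ^ ((5:ℝ)/2) * ρ x
  set J := ∫ x in (0:ℝ)..1, (A x) ^ ((1:ℝ)/2) * (a ^ 2)⁻¹
  have key : (1/8) * I1 - (1/16) * I2 - (1/8) * I3 - 2 * π * Iρ + (1/4 * ε) * J = 0 := by
    have expand : (fun x => (1/8) * (A x) ^ ((5:ℝ)/2) *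
        ((H x) ^ 2 - (1/2) * (H x - K x) ^ 2 - (K x) ^ 2 - 16 * π * ρ x)
      + (1/4) * (A x) ^ ((1:ℝ)/2) * (a ^ 2)⁻¹ * ε)
      = fun x => ((1/8) * ((A x) ^ ((5:ℝ)/2) * (H x) ^ 2)
        - (1/16) * ((A x) ^ ((5:ℝ)/2) * (H x - K x) ^ 2)
        - (1/8) * ((A x) ^ ((5:ℝ)/2) * (K x) ^ 2)
        - (2 * π) * ((A x) ^ ((5:ℝ)/2) * ρ x))
        + (1/4 * ε) * ((A x) ^ ((1:ℝ)/2) * (a ^ 2)⁻¹) := by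
      funext x; ring
    have : (∫ x in (0:ℝ)..1, ((1/8) * ((A x) ^ ((5:ℝ)/2) * (H x) ^ 2)
        - (1/16) * ((A x) ^ ((5:ℝ)/2) * (H x - K x) ^ 2)
        - (1/8) * ((A x) ^ ((5:ℝ)/2) * (K x) ^ 2)
        - (2 * π) * ((A x) ^ ((5:ℝ)/2) * ρ x))
        + (1/4 * ε) * ((A x) ^ ((1:ℝ)/2) * (a ^ 2)⁻¹)) = 0 := by
      rw [← expand, ← hddg]
      exact hint0
    rw [intervalIntegral.integral_add (by
        exact (((i1.const_mul _).sub (i2.const_mul _)).sub (i3.const_mul _)).sub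
          (iρ.const_mul _)) (iJ.const_mul _),
      intervalIntegral.integral_sub (by
        exact ((i1.const_mul _).sub (i2.const_mul _)).sub (i3.const_mul _))
        (iρ.const_mul _),
      intervalIntegral.integral_sub ((i1.const_mul _).sub (i2.const_mul _)) (i3.const_mul _),
      intervalIntegral.integral_sub (i1.const_mul _) (i2.const_mul _),
      intervalIntegral.integral_const_mul, intervalIntegral.integral_const_mul,
      intervalIntegral.integral_const_mul, intervalIntegral.integral_const_mul,
      intervalIntegral.integral_const_mul] at this
    linarith [this]
  have hI2 : 0 ≤ I2 := intervalIntegral.integral_nonneg (by norm_num)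
    (fun x _ => mul_nonneg (Real.rpow_nonneg (hApos x).le _) (sq_nonneg _))
  have hI3 : 0 ≤ I3 := intervalIntegral.integral_nonneg (by norm_num)
    (fun x _ => mul_nonneg (Real.rpow_nonneg (hApos x).le _) (sq_nonneg _))
  have hJ : 0 ≤ J := intervalIntegral.integral_nonneg (by norm_num)
    (fun x _ => mul_nonneg (Real.rpow_nonneg (hApos x).le _)
      (inv_nonneg.mpr (sq_nonneg a)))
  have hε1 : ε ≤ 1 := by rcases hε with h | h | h <;> rw [h] <;> norm_num
  nlinarith [mul_nonneg hJ (sub_nonneg.mpr hε1)]
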